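/- Let V be a Banach space and μ the Hausdorff measure of noncompactness. For any nonempty bounded set U ⊆ V, μ(U) = μ(convexHull(U)). In particular μ is invariant under taking the closed convex hull. -/

import Mathlib

open Metric Set Pointwise

/-- Hausdorff measure of noncompactness: infimum of ε > 0 such that B has a finite ε-net. -/
noncomputable def hausdorffMNC {X : Type*} [MetricSpace X] (B : Set X) : ℝ :=
  sInf {ε : ℝ | 0 < ε ∧ ∃ F : Finset X, B ⊆ ⋃ x ∈ F, Metric.ball x ε}

namespace HMNCAux

variable {X : Type*} [MetricSpace X]

def netSet (B : Set X) : Set ℝ :=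
  {ε : ℝ | 0 < ε ∧ ∃ F : Finset X, B ⊆ ⋃ x ∈ F, Metric.ball x ε}

lemma bddBelow_netSet (B : Set X) : BddBelow (netSet B) :=
  ⟨0, fun _ hε => le_of_lt hε.1⟩

lemma netSet_nonempty {B : Set X} (hne : B.Nonempty) (hb : Bornology.IsBounded B) :
    (netSet B).Nonempty := by
  obtain ⟨x, -⟩ := hne
  obtain ⟨r, hr, hsub⟩ := hb.subset_ball_lt 0 x
  exact ⟨r, hr, {x}, by simpa using hsub⟩

lemma mono {A B : Set X} (hAB : A ⊆ B) (hB : (netSet B).Nonempty) :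
    hausdorffMNC A ≤ hausdorffMNC B := by
  refine csInf_le_csInf (bddBelow_netSet A) hB ?_
  rintro ε ⟨hε, F, hF⟩
  exact ⟨hε, F, hAB.trans hF⟩

lemma le_of_approx {A B : Set X}
    (h : ∀ ε ∈ netSet B, ∀ δ : ℝ, 0 < δ → ε + δ ∈ netSet A)
    (hB : (netSet B).Nonempty) :
    hausdorffMNC A ≤ hausdorffMNC B := by
  refine le_csInf hB ?_
  intro ε hε
  refine le_of_forall_pos_le_add ?_
  intro δ hδ
  exact csInf_le (bddBelow_netSet A) (h ε hε δ hδ)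

lemma closure_approx {B : Set X} :
    ∀ ε ∈ netSet B, ∀ δ : ℝ, 0 < δ → ε + δ ∈ netSet (closure B) := by
  rintro ε ⟨hε, F, hF⟩ δ hδ
  refine ⟨by linarith, F, ?_⟩
  have h1 : closure B ⊆ ⋃ x ∈ (F : Set X), closure (ball x ε) := by
    rw [← Set.Finite.closure_biUnion F.finite_toSet]
    exact closure_mono hF
  intro z hz
  obtain ⟨x, hx, hzx⟩ := by simpa using h1 hz
  have := closure_ball_subset_closedBall hzx
  exact Set.mem_biUnion hx (by
    simp only [mem_ball]
    have : dist z x ≤ ε := this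
    linarith)

end HMNCAux

open HMNCAux in
lemma HMNCAux.conv_approx {V : Type*} [NormedAddCommGroup V] [NormedSpace ℝ V]
    {U : Set V} :
    ∀ ε ∈ netSet U, ∀ δ : ℝ, 0 < δ → ε + δ ∈ netSet (convexHull ℝ U) := by
  rintro ε ⟨hε, F, hF⟩ δ hδ
  -- conv U ⊆ convexHull F + ball 0 ε
  have hsub : convexHull ℝ U ⊆ convexHull ℝ (F : Set V) + ball (0 : V) ε := by
    refine convexHull_min ?_ ((convex_convexHull ℝ _).add (convex_ball 0 ε))
    intro u hu
    obtain ⟨x, hx, hux⟩ := by simpa using hF hu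
    exact ⟨x, subset_convexHull ℝ _ hx, u - x, by
      simpa [mem_ball, dist_eq_norm] using hux, by module⟩
  -- convexHull F is compact, get a finite δ-net G
  have hcpt : IsCompact (convexHull ℝ (F : Set V)) :=
    F.finite_toSet.isCompact_convexHull (𝕜 := ℝ)
  obtain ⟨t, ht, hcov⟩ := (totallyBounded_iff.mp hcpt.totallyBounded) δ hδ
  refine ⟨by linarith, ht.toFinset, ?_⟩
  intro z hz
  obtain ⟨a, ha, b, hb, rfl⟩ := hsub hz
  obtain ⟨y, hy, hay⟩ := by simpa using hcov ha
  refine Set.mem_iUnion₂.mpr ⟨y, (Set.Finite.mem_toFinset ht).mpr hy, ?_⟩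
  simp only [mem_ball] at *
  calc dist (a + b) y ≤ dist (a + b) a + dist a y := dist_triangle _ _ _
    _ < ε + δ := by
        have : dist (a + b) a = ‖b‖ := by simp [dist_eq_norm]
        have hbn : ‖b‖ < ε := by simpa [dist_eq_norm] using hb
        rw [this]; linarith

theorem hausdorffMNC_convexHull {V : Type*} [NormedAddCommGroup V] [NormedSpace ℝ V]
    [CompleteSpace V] (U : Set V) (hne : U.Nonempty) (hb : Bornology.IsBounded U) :
    hausdorffMNC U = hausdorffMNC (convexHull ℝ U) ∧
      hausdorffMNC U = hausdorffMNC (closure (convexHull ℝ U)) := by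
  have hbc : Bornology.IsBounded (convexHull ℝ U) := isBounded_convexHull.mpr hb
  have hCne := HMNCAux.netSet_nonempty hne.convexHull hbc
  have hUne := HMNCAux.netSet_nonempty hne hb
  have h1 : hausdorffMNC U = hausdorffMNC (convexHull ℝ U) :=
    le_antisymm (HMNCAux.mono (subset_convexHull ℝ U) hCne)
      (HMNCAux.le_of_approx HMNCAux.conv_approx hUne)
  have h2 : hausdorffMNC (convexHull ℝ U) = hausdorffMNC (closure (convexHull ℝ U)) :=
    le_antisymm
      (HMNCAux.mono subset_closure (HMNCAux.netSet_nonempty ((hne.convexHull).closure) hbc.closure))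
      (HMNCAux.le_of_approx HMNCAux.closure_approx hCne)
  exact ⟨h1, h1.trans h2⟩
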